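/- Let (P, ⪯, ∧) be a locally finite meet semilattice with a least element 0̂, and suppose there is a countable family of finite nonempty subsets S₁, S₂, … of P whose union is all of P. If f : P → ℝ has the form f(x) = ∑_{y : y ⪯ x} g(y) for a function g : P → ℝ satisfying g(y) ≥ 0 for all y ∈ P, then f is positive definite. -/

import Mathlib

/-- A function `f : P → ℝ` on a meet semilattice is *positive definite* if for every
finite nonempty subset `S ⊆ P` the meet matrix `(S)_f`, with entries `f (x ⊓ y)` for
`x, y ∈ S`, is positive semidefinite. -/
def IsPosDefOnMeets {P : Type*} [SemilatticeInf P] (f : P → ℝ) : Prop :=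
  ∀ S : Finset P, S.Nonempty →
    (Matrix.of fun x y : S => f (x.1 ⊓ y.1)).PosSemidef

/-- Let `(P, ⪯, ∧)` be a locally finite meet semilattice with a least
element `⊥`, admitting a countable covering by finite nonempty subsets `S₁, S₂, …`.
If `f(x) = ∑_{y ⪯ x} g(y)` for some `g : P → ℝ` with `g ≥ 0`, then `f` is positive
definite. -/
theorem posDef_of_sum_nonneg
    {P : Type*} [SemilatticeInf P] [OrderBot P] [LocallyFiniteOrder P]
    (S : ℕ → Finset P) (hne : ∀ m, (S m).Nonempty)
    (hcov : ∀ x : P, ∃ m, x ∈ S m)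
    (g : P → ℝ) (hg : ∀ y : P, 0 ≤ g y) (f : P → ℝ)
    (hf : ∀ x : P, f x = ∑ y ∈ Finset.Icc (⊥ : P) x, g y) :
    IsPosDefOnMeets f := by
  intro A _
  classical
  set T : Finset P := A.biUnion (fun x => Finset.Icc ⊥ x) with hT
  have key : ∀ i j : A, f (i.1 ⊓ j.1) =
      ∑ z ∈ T, if z ≤ i.1 ∧ z ≤ j.1 then g z else 0 := by
    intro i j
    rw [hf, Finset.sum_ite, Finset.sum_const_zero, add_zero]
    congr 1
    ext z
    simp only [Finset.mem_filter, Finset.mem_Icc, bot_le, true_and, le_inf_iff]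
    constructor
    · rintro ⟨hi, hj⟩
      exact ⟨Finset.mem_biUnion.2 ⟨i.1, i.2, Finset.mem_Icc.2 ⟨bot_le, hi⟩⟩, hi, hj⟩
    · rintro ⟨-, h⟩; exact h
  rw [Matrix.posSemidef_iff_dotProduct_mulVec]
  constructor
  · ext i j
    simp only [Matrix.conjTranspose_apply, Matrix.of_apply, star_trivial, inf_comm]
  · intro v
    have calc1 : dotProduct (star v) ((Matrix.of fun x y : A => f (x.1 ⊓ y.1)).mulVec v) =
        ∑ z ∈ T, g z * (∑ i : A, if z ≤ i.1 then v i else 0) ^ 2 := by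
      simp only [dotProduct, Matrix.mulVec, dotProduct, Matrix.of_apply,
        star_trivial]
      calc ∑ i : A, v i * ∑ j : A, f (i.1 ⊓ j.1) * v j
          = ∑ i : A, ∑ j : A, ∑ z ∈ T,
              g z * ((if z ≤ i.1 then v i else 0) * (if z ≤ j.1 then v j else 0)) := by
            refine Finset.sum_congr rfl fun i _ => ?_
            rw [Finset.mul_sum]
            refine Finset.sum_congr rfl fun j _ => ?_
            rw [key i j, Finset.sum_mul, Finset.mul_sum]
            refine Finset.sum_congr rfl fun z _ => ?_
            split_ifs with h1 h2 h3 <;>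
first | ring1 | tauto
        _ = ∑ i : A, ∑ z ∈ T, ∑ j : A,
              g z * ((if z ≤ i.1 then v i else 0) * (if z ≤ j.1 then v j else 0)) :=
            Finset.sum_congr rfl fun i _ => Finset.sum_comm
        _ = ∑ z ∈ T, ∑ i : A, ∑ j : A,
              g z * ((if z ≤ i.1 then v i else 0) * (if z ≤ j.1 then v j else 0)) :=
            Finset.sum_comm
        _ = ∑ z ∈ T, g z * (∑ i : A, if z ≤ i.1 then v i else 0) ^ 2 := by
            refine Finset.sum_congr rfl fun z _ => ?_
            rw [sq, Finset.sum_mul_sum, Finset.mul_sum]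
            exact Finset.sum_congr rfl fun i _ => (Finset.mul_sum _ _ _).symm
    rw [calc1]
    exact Finset.sum_nonneg fun z _ => mul_nonneg (hg z) (sq_nonneg _)
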